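/- Let m and B be positive integers and let e₁, …, e_{3m} be positive integers such that B < 4·eᵢ and 2·eᵢ < B for every i, and Σᵢ eᵢ = m·B. Over the alphabet {a, b}, let sᵢ = a^{eᵢ} b^{eᵢ} for each i. Then ⧢(s₁, …, s_{3m}) ∩ (a^B b^B)^* ≠ ∅ if and only if the index set {1, …, 3m} can be partitioned into m sets of size 3, each of which has element-sum Σ_{i ∈ T} eᵢ = B. -/

import Mathlib

namespace CTS

/-- Shuffle of two words: `ε ⧢ v = {v}`, `u ⧢ ε = {u}`,
`(x·u) ⧢ (y·v) = x·(u ⧢ y·v) ∪ y·(x·u ⧢ v)`. -/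
def shuffle {α : Type*} : List α → List α → Set (List α)
  | [], v => {v}
  | u, [] => {u}
  | x :: u, y :: v =>
      (List.cons x) '' shuffle u (y :: v) ∪ (List.cons y) '' shuffle (x :: u) v
  termination_by u v => u.length + v.length

/-- Shuffle of a tuple of words: `⧢() = {ε}` and
`⧢(w₁, …, wₘ₊₁) = ⋃_{v ∈ ⧢(w₁, …, wₘ)} v ⧢ wₘ₊₁`. -/
def Shuffles {α : Type*} (ws : List (List α)) : Set (List α) :=
  ws.foldl (fun S w => ⋃ v ∈ S, shuffle v w) {[]}

/-- `wpow u n` is the `n`-fold concatenation `u^n` of the word `u`. -/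
def wpow {α : Type*} (u : List α) : ℕ → List α
  | 0 => []
  | n + 1 => u ++ wpow u n

/-- `star u = {u^n : n ∈ ℕ}`. -/
def star {α : Type*} (u : List α) : Set (List α) := {w | ∃ n, w = wpow u n}

/-- Words that are (possibly empty) concatenations of blocks from `S`. -/
def ConcatsOf {α : Type*} (S : Set (List α)) : Set (List α) :=
  {w | ∃ L : List (List α), (∀ u ∈ L, u ∈ S) ∧ w = L.flatten}

/-- The two-letter alphabet `{a, b}`. -/
inductive AB : Type
  | a : AB
  | b : AB
deriving DecidableEq

/-! ### Interleavings -/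

inductive Interleave {α : Type*} : List α → List α → List α → Prop
  | nil : Interleave [] [] []
  | left {x u v w} : Interleave u v w → Interleave (x :: u) v (x :: w)
  | right {y u v w} : Interleave u v w → Interleave u (y :: v) (y :: w)

variable {α : Type*}

lemma interleave_nil_left (v : List α) : Interleave [] v v := by
  induction v with
  | nil => exact .nil
  | cons y v ih => exact .right ih

lemma interleave_nil_right (u : List α) : Interleave u [] u := by
  induction u with
  | nil => exact .nil
  | cons x u ih => exact .left ih

lemma shuffle_nil_left (v : List α) : shuffle [] v = {v} := by
  cases v <;> simp [shuffle]

lemma shuffle_nil_right (u : List α) : shuffle u [] = {u} := by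
  cases u <;> simp [shuffle]

lemma shuffle_cons_cons (x y : α) (u v : List α) :
    shuffle (x :: u) (y :: v) =
      (List.cons x) '' shuffle u (y :: v) ∪ (List.cons y) '' shuffle (x :: u) v := by
  simp [shuffle]

lemma mem_shuffle_of_interleave {u v w : List α} (h : Interleave u v w) :
    w ∈ shuffle u v := by
  induction h with
  | nil => simp [shuffle]
  | @left x u v w h ih =>
    cases v with
    | nil => rw [shuffle_nil_right] at ih ⊢; simp_all
    | cons y v' => rw [shuffle_cons_cons]; exact Or.inl ⟨w, ih, rfl⟩
  | @right y u v w h ih =>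
    cases u with
    | nil => rw [shuffle_nil_left] at ih ⊢; simp_all
    | cons x u' => rw [shuffle_cons_cons]; exact Or.inr ⟨w, ih, rfl⟩

lemma interleave_of_mem_shuffle : ∀ {u v w : List α}, w ∈ shuffle u v → Interleave u v w := by
  intro u
  induction u with
  | nil =>
    intro v w h
    rw [shuffle_nil_left, Set.mem_singleton_iff] at h
    subst h
    exact interleave_nil_left _
  | cons x u ihu =>
    intro v
    induction v with
    | nil =>
      intro w h
      rw [shuffle_nil_right, Set.mem_singleton_iff] at h
      subst h
      exact interleave_nil_right _
    | cons y v ihv =>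
      intro w h
      rw [shuffle_cons_cons] at h
      rcases h with ⟨w', hw', rfl⟩ | ⟨w', hw', rfl⟩
      · exact .left (ihu hw')
      · exact .right (ihv hw')

lemma Interleave.app {u1 v1 w1 u2 v2 w2 : List α} (h1 : Interleave u1 v1 w1)
    (h2 : Interleave u2 v2 w2) :
    Interleave (u1 ++ u2) (v1 ++ v2) (w1 ++ w2) := by
  induction h1 with
  | nil => exact h2
  | left _ ih => exact .left ih
  | right _ ih => exact .right ih

lemma interleave_replicate (x : α) (p q : ℕ) :
    Interleave (List.replicate p x) (List.replicate q x) (List.replicate (p + q) x) := by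
  induction p with
  | zero => simpa using interleave_nil_left _
  | succ p ih =>
    have : p + 1 + q = (p + q) + 1 := by omega
    rw [this, List.replicate_succ, List.replicate_succ]
    exact .left ih

lemma Shuffles_nil : Shuffles ([] : List (List α)) = {[]} := rfl

lemma Shuffles_concat (ws : List (List α)) (u : List α) :
    Shuffles (ws ++ [u]) = ⋃ v ∈ Shuffles ws, shuffle v u := by
  simp [Shuffles, List.foldl_append]

lemma mem_shuffles_concat {ws : List (List α)} {u w : List α} :
    w ∈ Shuffles (ws ++ [u]) ↔ ∃ v ∈ Shuffles ws, Interleave v u w := by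
  rw [Shuffles_concat]
  simp only [Set.mem_iUnion, exists_prop]
  exact ⟨fun ⟨v, hv, hw⟩ => ⟨v, hv, interleave_of_mem_shuffle hw⟩,
    fun ⟨v, hv, hw⟩ => ⟨v, hv, mem_shuffle_of_interleave hw⟩⟩

/-! ### Colorings -/

/-- positions of `t` colored `j` by `c`. -/
def select (t : List α) (c : List ℕ) (j : ℕ) : List α :=
  ((t.zip c).filter fun p => p.2 == j).map Prod.fst

@[simp] lemma select_nil (c : List ℕ) (j : ℕ) : select ([] : List α) c j = [] := rfl

@[simp] lemma select_nil' (t : List α) (j : ℕ) : select t [] j = [] := by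
  simp [select]

lemma select_cons (x : α) (t : List α) (c0 : ℕ) (c : List ℕ) (j : ℕ) :
    select (x :: t) (c0 :: c) j = if c0 = j then x :: select t c j else select t c j := by
  by_cases h : c0 = j <;> simp [select, h]

lemma select_append {t1 t2 : List α} {c1 c2 : List ℕ} (h : t1.length = c1.length) (j : ℕ) :
    select (t1 ++ t2) (c1 ++ c2) j = select t1 c1 j ++ select t2 c2 j := by
  simp [select, List.zip_append h, List.filter_append]

/-- merging a coloring with a fresh color along an interleaving -/
lemma interleave_coloring {v u w : List α} (h : Interleave v u w) :
    ∀ (cv : List ℕ) (k : ℕ), cv.length = v.length → (∀ x ∈ cv, x ≠ k) →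
    ∃ cw : List ℕ, cw.length = w.length ∧ (∀ x ∈ cw, x ∈ cv ∨ x = k) ∧
      select w cw k = u ∧ ∀ j, j ≠ k → select w cw j = select v cv j := by
  induction h with
  | nil =>
    intro cv k hlen _
    exact ⟨[], by simp, by simp, by simp, by simp⟩
  | @left x v' u' w' h ih =>
    intro cv k hlen hk
    cases cv with
    | nil => simp at hlen
    | cons c0 cv' =>
      obtain ⟨cw, hcl, hcm, hsk, hsj⟩ := ih cv' k (by simpa using hlen)
        (fun x hx => hk x (List.mem_cons_of_mem _ hx))
      have hc0 : c0 ≠ k := hk c0 (List.mem_cons_self)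
      refine ⟨c0 :: cw, by simp [hcl], ?_, ?_, ?_⟩
      · intro y hy
        rcases List.mem_cons.1 hy with rfl | hy
        · exact Or.inl (List.mem_cons_self)
        · rcases hcm y hy with h' | h'
          · exact Or.inl (List.mem_cons_of_mem _ h')
          · exact Or.inr h'
      · rw [select_cons, if_neg hc0]; exact hsk
      · intro j hj
        rw [select_cons, select_cons]
        by_cases h' : c0 = j <;> simp [h', hsj j hj]
  | @right y v' u' w' h ih =>
    intro cv k hlen hk
    obtain ⟨cw, hcl, hcm, hsk, hsj⟩ := ih cv k hlen hk
    refine ⟨k :: cw, by simp [hcl], ?_, ?_, ?_⟩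
    · intro z hz
      rcases List.mem_cons.1 hz with rfl | hz
      · exact Or.inr rfl
      · exact hcm z hz
    · rw [select_cons, if_pos rfl, hsk]
    · intro j hj
      rw [select_cons, if_neg (fun h' => hj h'.symm)]
      exact hsj j hj

/-- every member of a multi-shuffle admits a coloring realizing each word -/
lemma coloring_of_mem_shuffles :
    ∀ (ws : List (List α)) (w : List α), w ∈ Shuffles ws →
    ∃ c : List ℕ, c.length = w.length ∧ (∀ x ∈ c, x < ws.length) ∧
      ∀ j (hj : j < ws.length), select w c j = ws[j] := by
  intro ws
  induction ws using List.reverseRecOn with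
  | nil =>
    intro w hw
    rw [Shuffles_nil, Set.mem_singleton_iff] at hw
    subst hw
    exact ⟨[], by simp, by simp, by simp⟩
  | append_singleton ws u ih =>
    intro w hw
    rw [mem_shuffles_concat] at hw
    obtain ⟨v, hv, hint⟩ := hw
    obtain ⟨cv, hcl, hcb, hcs⟩ := ih v hv
    obtain ⟨cw, hwl, hwm, hsk, hsj⟩ := interleave_coloring hint cv ws.length hcl
      (fun x hx => Nat.ne_of_lt (hcb x hx))
    refine ⟨cw, hwl, ?_, ?_⟩
    · intro x hx
      rcases hwm x hx with h' | h'
      · have := hcb x h'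
        simp only [List.length_append, List.length_singleton]
        omega
      · simp [h']
    · intro j hj
      simp only [List.length_append, List.length_singleton] at hj
      rcases Nat.lt_or_ge j ws.length with h' | h'
      · rw [hsj j (Nat.ne_of_lt h'), hcs j h', List.getElem_append_left h']
      · have hj' : j = ws.length := by omega
        subst hj'
        rw [hsk]
        simp

/-! ### Counting -/

lemma sum_count_select [DecidableEq α] (y : α) (n : ℕ) :
    ∀ (t : List α) (c : List ℕ), c.length = t.length → (∀ x ∈ c, x < n) →
    ∑ j ∈ Finset.range n, (select t c j).count y = t.count y := by
  intro t
  induction t with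
  | nil => intro c _ _; simp
  | cons x t ih =>
    intro c hlen hc
    cases c with
    | nil => simp at hlen
    | cons c0 c' =>
      have hc0 : c0 < n := hc c0 (List.mem_cons_self)
      have step : ∀ j, (select (x :: t) (c0 :: c') j).count y
          = (select t c' j).count y + (if c0 = j then (if x = y then 1 else 0) else 0) := by
        intro j
        rw [select_cons]
        by_cases h : c0 = j
        · simp [h, List.count_cons]
        · simp [h]
      rw [Finset.sum_congr rfl (fun j _ => step j), Finset.sum_add_distrib,
        ih c' (by simpa using hlen) (fun x hx => hc x (List.mem_cons_of_mem _ hx)),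
        Finset.sum_ite_eq, if_pos (Finset.mem_range.2 hc0), List.count_cons]
      simp [beq_iff_eq]

lemma select_take_prefix (t : List α) (c : List ℕ) (h : c.length = t.length) (p j : ℕ) :
    select (t.take p) (c.take p) j <+: select t c j := by
  conv_rhs => rw [← List.take_append_drop p t, ← List.take_append_drop p c]
  rw [select_append (by simp [h])]
  exact List.prefix_append _ _

lemma prefix_append_cases {t u v : List α} (h : t <+: u ++ v) :
    t <+: u ∨ ∃ t', t = u ++ t' ∧ t' <+: v := by
  have ht := List.prefix_iff_eq_take.1 h
  rw [List.take_append] at ht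
  rcases Nat.le_total t.length u.length with hl | hl
  · left
    have h0 : t.length - u.length = 0 := by omega
    rw [h0] at ht
    simp only [List.take_zero, List.append_nil] at ht
    exact ht ▸ List.take_prefix _ _
  · right
    rw [List.take_of_length_le hl] at ht
    exact ⟨v.take (t.length - u.length), ht, List.take_prefix _ _⟩

lemma prefix_replicate {t : List α} {x : α} {n : ℕ} (h : t <+: List.replicate n x) :
    t = List.replicate t.length x ∧ t.length ≤ n := by
  constructor
  · exact List.eq_replicate_of_mem fun b hb =>
      List.eq_of_mem_replicate (h.sublist.subset hb)
  · simpa using h.length_le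

/-- the word `a^e b^e` -/
def sab (e : ℕ) : List AB := List.replicate e AB.a ++ List.replicate e AB.b

lemma prefix_sab {t : List AB} {e : ℕ} (h : t <+: sab e) :
    ∃ x y : ℕ, x ≤ e ∧ y ≤ e ∧ (y = 0 ∨ x = e) ∧
      t = List.replicate x AB.a ++ List.replicate y AB.b := by
  rcases prefix_append_cases h with h' | ⟨t', rfl, h'⟩
  · obtain ⟨ht, hle⟩ := prefix_replicate h'
    exact ⟨t.length, 0, hle, Nat.zero_le _, Or.inl rfl, by simpa using ht⟩
  · obtain ⟨ht, hle⟩ := prefix_replicate h'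
    exact ⟨e, t'.length, le_refl _, hle, Or.inr rfl, by rw [← ht]⟩

@[simp] lemma count_a_ab (x y : ℕ) :
    (List.replicate x AB.a ++ List.replicate y AB.b).count AB.a = x := by
  simp [List.count_append, List.count_replicate]

@[simp] lemma count_b_ab (x y : ℕ) :
    (List.replicate x AB.a ++ List.replicate y AB.b).count AB.b = y := by
  simp [List.count_append, List.count_replicate]

lemma wpow_add (u : List α) (p q : ℕ) : wpow u (p + q) = wpow u p ++ wpow u q := by
  induction p with
  | zero => simp [wpow]
  | succ p ih =>
    have : p + 1 + q = (p + q) + 1 := by omega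
    rw [this, wpow, wpow, ih, List.append_assoc]

lemma wpow_length (u : List α) (n : ℕ) : (wpow u n).length = n * u.length := by
  induction n with
  | zero => simp [wpow]
  | succ n ih => rw [wpow, List.length_append, ih]; ring

lemma count_wpow [DecidableEq α] (u : List α) (n : ℕ) (y : α) :
    (wpow u n).count y = n * u.count y := by
  induction n with
  | zero => simp [wpow]
  | succ n ih => rw [wpow, List.count_append, ih]; ring

lemma wpow_take {B : ℕ} (k n : ℕ) (hk : k ≤ n) :
    (wpow (sab B) n).take (2 * k * B) = wpow (sab B) k := by
  have h1 : n = k + (n - k) := by omega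
  rw [h1, wpow_add]
  apply List.take_left'
  rw [wpow_length]
  simp [sab]
  ring

/-! ### Building a shuffle from a partition -/

/-- blocks word: `W [c₁,…,cₘ] = a^{c₁}b^{c₁}⋯a^{cₘ}b^{cₘ}` -/
def W : List ℕ → List AB
  | [] => []
  | c :: cs => sab c ++ W cs

def blockSum (L : List (ℕ × ℕ)) (k : ℕ) : ℕ :=
  (L.map fun p => if p.2 = k then p.1 else 0).sum

lemma W_replicate (n B : ℕ) : W (List.replicate n B) = wpow (sab B) n := by
  induction n with
  | zero => rfl
  | succ n ih => rw [List.replicate_succ, W, ih]; rfl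

lemma W_zero : ∀ cs : List ℕ, (∀ k, cs.getD k 0 = 0) → W cs = [] := by
  intro cs
  induction cs with
  | nil => intro _; rfl
  | cons c cs ih =>
    intro h
    have h0 : c = 0 := h 0
    rw [W, ih fun k => h (k + 1), h0]
    simp [sab]

lemma interleave_sab {c e : ℕ} (h : e ≤ c) : Interleave (sab (c - e)) (sab e) (sab c) := by
  have h1 : c - e + e = c := by omega
  have ha := interleave_replicate AB.a (c - e) e
  have hb := interleave_replicate AB.b (c - e) e
  rw [h1] at ha hb
  exact ha.app hb

lemma insert_block : ∀ (cs : List ℕ) (j e : ℕ), j < cs.length → e ≤ cs.getD j 0 →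
    Interleave (W (cs.set j (cs.getD j 0 - e))) (sab e) (W cs) := by
  intro cs
  induction cs with
  | nil => intro j e hj _; simp at hj
  | cons c cs ih =>
    intro j e hj he
    cases j with
    | zero =>
      simp only [List.getD] at he ⊢
      rw [List.set]
      rw [W, W]
      have := (interleave_sab he).app (interleave_nil_right (W cs))
      simpa using this
    | succ j =>
      rw [List.set, W, W]
      have h2 : (c :: cs).getD (j+1) 0 = cs.getD j 0 := rfl
      rw [h2] at he ⊢
      have := (interleave_nil_right (sab c)).app (ih j e (by simpa using hj) he)
      simpa using this

lemma build : ∀ (L : List (ℕ × ℕ)) (cs : List ℕ),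
    (∀ p ∈ L, p.2 < cs.length) → (∀ k, blockSum L k = cs.getD k 0) →
    W cs ∈ Shuffles (L.map fun p => sab p.1) := by
  intro L
  induction L using List.reverseRecOn with
  | nil =>
    intro cs _ hsum
    have : W cs = [] := W_zero cs fun k => (hsum k).symm.trans (by simp [blockSum])
    rw [this]
    simp only [List.map_nil, Shuffles_nil]
    rfl
  | append_singleton L p ih =>
    intro cs hblk hsum
    obtain ⟨e, j⟩ := p
    have hj : j < cs.length := hblk (e, j) (by simp)
    have hsum' : ∀ k, blockSum (L ++ [(e, j)]) k = blockSum L k + (if j = k then e else 0) := by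
      intro k
      simp [blockSum]
    have he : e ≤ cs.getD j 0 := by
      have := hsum j
      rw [hsum' j, if_pos rfl] at this
      omega
    set cs' := cs.set j (cs.getD j 0 - e) with hcs'
    have hlen' : cs'.length = cs.length := by simp [hcs']
    have hgd : ∀ k, cs'.getD k 0 = if k = j then cs.getD j 0 - e else cs.getD k 0 := by
      intro k
      rw [List.getD_eq_getElem?_getD, hcs', List.getElem?_set]
      by_cases hk : j = k
      · rw [if_pos hk, if_pos hj, if_pos hk.symm]
        rfl
      · rw [if_neg hk, if_neg (fun h => hk h.symm), ← List.getD_eq_getElem?_getD]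
    have hB : W cs' ∈ Shuffles (L.map fun p => sab p.1) := by
      apply ih
      · intro q hq
        rw [hlen']
        exact hblk q (List.mem_append_left _ hq)
      · intro k
        rw [hgd k]
        have h2 := hsum k
        rw [hsum' k] at h2
        by_cases hk : k = j
        · subst hk
          rw [if_pos rfl] at h2 ⊢
          omega
        · rw [if_neg (fun h => hk h.symm)] at h2
          rw [if_neg hk]
          omega
    rw [List.map_append]
    exact mem_shuffles_concat.2 ⟨W cs', hB, insert_block cs j e hj he⟩

/-- prefix `a`-count of color class `j` -/
def Acount (w : List AB) (c : List ℕ) (p : ℕ) (j : ℕ) : ℕ :=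
  (select (w.take p) (c.take p) j).count AB.a

/-- correctness of the reduction from UNARY-3-PARTITION:
with `sᵢ = a^{eᵢ} b^{eᵢ}`, the tuple `(s₁, …, s₃ₘ)` has a shuffle in `(a^B b^B)^*`
iff the indices can be partitioned into `m` triples each summing to `B`. -/
theorem stmt2 (m B : ℕ) (hm : 0 < m) (hB : 0 < B)
    (e : Fin (3 * m) → ℕ) (he : ∀ i, 0 < e i)
    (hlb : ∀ i, B < 4 * e i) (hub : ∀ i, 2 * e i < B)
    (hsum : ∑ i, e i = m * B) :
    (Shuffles (List.ofFn fun i =>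
        List.replicate (e i) AB.a ++ List.replicate (e i) AB.b) ∩
      star (List.replicate B AB.a ++ List.replicate B AB.b)).Nonempty ↔
    ∃ part : Fin m → Finset (Fin (3 * m)),
      (∀ j, (part j).card = 3) ∧
      (∀ j, ∑ i ∈ part j, e i = B) ∧
      (∀ j k, j ≠ k → Disjoint (part j) (part k)) ∧
      (∀ i, ∃ j, i ∈ part j) := by
  classical
  have hofn : (List.ofFn fun i : Fin (3*m) =>
      List.replicate (e i) AB.a ++ List.replicate (e i) AB.b)
      = List.ofFn (fun i => sab (e i)) := rfl
  have hu : List.replicate B AB.a ++ List.replicate B AB.b = sab B := rfl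
  rw [hofn, hu]
  constructor
  · -- shuffle exists → partition exists
    rintro ⟨w, hwS, hwStar⟩
    obtain ⟨n, rfl⟩ := hwStar
    obtain ⟨c, hclen, hcb, hcsel⟩ := coloring_of_mem_shuffles _ _ hwS
    have hcb' : ∀ x ∈ c, x < 3*m := by
      intro x hx
      have := hcb x hx
      rwa [List.length_ofFn] at this
    have hsel : ∀ i : Fin (3*m), select (wpow (sab B) n) c (i : ℕ) = sab (e i) := by
      intro i
      have h := hcsel (i : ℕ) (by rw [List.length_ofFn]; exact i.isLt)
      rw [List.getElem_ofFn] at h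
      simpa using h
    have hcsab : (sab B).count AB.a = B := count_a_ab B B
    have hnm : n = m := by
      have h1 : ∑ i : Fin (3*m), (select (wpow (sab B) n) c (i:ℕ)).count AB.a
          = (wpow (sab B) n).count AB.a := by
        rw [Fin.sum_univ_eq_sum_range (fun j => (select (wpow (sab B) n) c j).count AB.a) (3*m)]
        exact sum_count_select AB.a (3*m) _ c hclen hcb'
      have h2 : ∀ i : Fin (3*m), (select (wpow (sab B) n) c (i:ℕ)).count AB.a = e i := by
        intro i
        rw [hsel i]
        exact count_a_ab _ _
      rw [Finset.sum_congr rfl (fun i _ => h2 i)] at h1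
      rw [count_wpow, hcsab] at h1
      rw [hsum] at h1
      exact (Nat.eq_of_mul_eq_mul_right hB h1).symm
    rw [hnm] at hsel hclen
    set wfull := wpow (sab B) m with hwf
    have hwlen : wfull.length = 2 * m * B := by
      rw [hwf, wpow_length]
      simp only [sab, List.length_append, List.length_replicate]
      ring
    have hprefix : ∀ k (i : Fin (3*m)),
        select (wfull.take (2*k*B)) (c.take (2*k*B)) (i:ℕ) <+: sab (e i) := by
      intro k i
      rw [← hsel i]
      exact select_take_prefix _ _ hclen _ _
    have hcap : ∀ k (i : Fin (3*m)), Acount wfull c (2*k*B) (i:ℕ) ≤ e i := by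
      intro k i
      obtain ⟨x, y, hx, hy, hxy, hform⟩ := prefix_sab (hprefix k i)
      rw [Acount, hform, count_a_ab]
      exact hx
    have hmono : ∀ p q, p ≤ q → ∀ i : Fin (3*m),
        Acount wfull c p (i:ℕ) ≤ Acount wfull c q (i:ℕ) := by
      intro p q hpq i
      have h1 : wfull.take p = (wfull.take q).take p := by
        rw [List.take_take, min_eq_left hpq]
      have h2 : c.take p = (c.take q).take p := by
        rw [List.take_take, min_eq_left hpq]
      rw [Acount, Acount, h1, h2]
      exact ((select_take_prefix (wfull.take q) (c.take q)
        (by simp [hclen]) p (i:ℕ)).sublist).count_le _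
    set S : ℕ → Finset (Fin (3*m)) :=
      fun k => Finset.univ.filter (fun i => Acount wfull c (2*k*B) (i:ℕ) = e i) with hS
    have hSmem : ∀ k (i : Fin (3*m)), i ∈ S k ↔ Acount wfull c (2*k*B) (i:ℕ) = e i := by
      intro k i
      rw [hS]
      simp
    have hSmono : ∀ p q, p ≤ q → S p ⊆ S q := by
      intro p q hpq i hi
      rw [hSmem] at hi ⊢
      have h1 := hmono (2*p*B) (2*q*B)
        (Nat.mul_le_mul_right B (Nat.mul_le_mul_left 2 hpq)) i
      have h2 := hcap q i
      omega
    have hS0 : S 0 = ∅ := by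
      ext i
      rw [hSmem]
      simp only [Finset.notMem_empty, iff_false]
      have h0 : Acount wfull c (2*0*B) (i:ℕ) = 0 := by
        simp [Acount]
      have := he i
      omega
    have hSm : S m = Finset.univ := by
      ext i
      simp only [Finset.mem_univ, iff_true]
      rw [hSmem, Acount, List.take_of_length_le (le_of_eq hwlen),
        List.take_of_length_le (le_of_eq (hclen.trans hwlen)), hsel i]
      exact count_a_ab _ _
    have hsum_lemma : ∀ k, k ≤ m → ∑ i ∈ S k, e i = k * B := by
      intro k hk
      have htake : wfull.take (2*k*B) = wpow (sab B) k := wpow_take k m hk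
      have hctlen : (c.take (2*k*B)).length = (wfull.take (2*k*B)).length := by
        simp [hclen]
      have hctb : ∀ x ∈ c.take (2*k*B), x < 3*m := fun x hx =>
        hcb' x ((List.take_prefix _ _).sublist.subset hx)
      have hstruct := fun i : Fin (3*m) => prefix_sab (hprefix k i)
      choose X Y hX hY hXY hform using hstruct
      have hsums : ∀ y : AB,
          ∑ i : Fin (3*m), (select (wfull.take (2*k*B)) (c.take (2*k*B)) (i:ℕ)).count y
          = (wpow (sab B) k).count y := by
        intro y
        rw [Fin.sum_univ_eq_sum_range
          (fun j => (select (wfull.take (2*k*B)) (c.take (2*k*B)) j).count y) (3*m), ← htake]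
        exact sum_count_select y (3*m) _ _ hctlen hctb
      have hsa : ∑ i : Fin (3*m), X i = k * B := by
        have h := hsums AB.a
        rw [count_wpow, hcsab] at h
        rw [← h]
        exact Finset.sum_congr rfl fun i _ => by rw [hform i, count_a_ab]
      have hcsb : (sab B).count AB.b = B := count_b_ab B B
      have hsb : ∑ i : Fin (3*m), Y i = k * B := by
        have h := hsums AB.b
        rw [count_wpow, hcsb] at h
        rw [← h]
        exact Finset.sum_congr rfl fun i _ => by rw [hform i, count_b_ab]
      have hYX : ∀ i : Fin (3*m), Y i ≤ X i := by
        intro i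
        rcases hXY i with h | h
        · omega
        · have := hY i
          omega
      have hpt : ∀ i ∈ Finset.univ, Y i = X i :=
        (Finset.sum_eq_sum_iff_of_le (fun i _ => hYX i)).1 (by rw [hsb, hsa])
      have hAX : ∀ i : Fin (3*m), Acount wfull c (2*k*B) (i:ℕ) = X i := by
        intro i
        rw [Acount, hform i, count_a_ab]
      have hdich : ∀ i : Fin (3*m), X i = 0 ∨ X i = e i := by
        intro i
        rcases hXY i with h | h
        · left
          have := hpt i (Finset.mem_univ i)
          omega
        · right
          exact h
      calc ∑ i ∈ S k, e i = ∑ i ∈ S k, X i := by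
            refine Finset.sum_congr rfl fun i hi => ?_
            rw [hSmem] at hi
            rw [← hi, hAX i]
        _ = ∑ i : Fin (3*m), X i := by
            refine Finset.sum_subset (Finset.subset_univ _) fun i _ hni => ?_
            rw [hSmem] at hni
            rcases hdich i with h | h
            · exact h
            · exact absurd (by rw [hAX i, h]) hni
        _ = k * B := hsa
    have hplus : ∀ j : ℕ, j < m → ∑ i ∈ S (j+1) \ S j, e i = B := by
      intro j hj
      have h1 := Finset.sum_sdiff (f := e) (hSmono j (j+1) (Nat.le_succ j))
      rw [hsum_lemma j (le_of_lt hj), hsum_lemma (j+1) (by omega)] at h1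
      have h2 : (j+1) * B = j * B + B := by ring
      omega
    refine ⟨fun j => S ((j:ℕ)+1) \ S (j:ℕ), ?_, ?_, ?_, ?_⟩
    · -- cardinality 3
      intro j
      show (S ((j:ℕ)+1) \ S (j:ℕ)).card = 3
      have hsumB := hplus j j.isLt
      set T := S ((j:ℕ)+1) \ S (j:ℕ) with hT
      have hne : T.Nonempty := by
        rcases T.eq_empty_or_nonempty with h | h
        · rw [h, Finset.sum_empty] at hsumB
          omega
        · exact h
      have hlt4 : T.card * B < 4 * B := by
        have h1 := Finset.sum_lt_sum_of_nonempty hne (fun i _ => hlb i)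
        rw [Finset.sum_const, smul_eq_mul] at h1
        rw [← Finset.mul_sum, hsumB] at h1
        exact h1
      have hgt2 : 2 * B < T.card * B := by
        have h1 := Finset.sum_lt_sum_of_nonempty hne (fun i _ => hub i)
        rw [Finset.sum_const, smul_eq_mul] at h1
        rw [← Finset.mul_sum, hsumB] at h1
        exact h1
      have h4 : T.card < 4 := by
        by_contra hcon
        push_neg at hcon
        have := Nat.mul_le_mul_right B hcon
        omega
      have h2 : 2 < T.card := by
        by_contra hcon
        push_neg at hcon
        have := Nat.mul_le_mul_right B hcon
        omega
      omega
    · -- sums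
      intro j
      show ∑ i ∈ S ((j:ℕ)+1) \ S (j:ℕ), e i = B
      exact hplus j j.isLt
    · -- disjoint
      intro j k hjk
      show Disjoint (S ((j:ℕ)+1) \ S (j:ℕ)) (S ((k:ℕ)+1) \ S (k:ℕ))
      have key : ∀ (j k : Fin m), (j:ℕ) < (k:ℕ) →
          Disjoint (S ((j:ℕ)+1) \ S (j:ℕ)) (S ((k:ℕ)+1) \ S (k:ℕ)) := by
        intro j k h
        rw [Finset.disjoint_left]
        intro i hi hik
        have h1 : i ∈ S ((j:ℕ)+1) := (Finset.mem_sdiff.1 hi).1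
        have h2 : i ∉ S (k:ℕ) := (Finset.mem_sdiff.1 hik).2
        exact h2 (hSmono _ _ (by omega) h1)
      rcases lt_trichotomy (j:ℕ) (k:ℕ) with h | h | h
      · exact key j k h
      · exact absurd (Fin.ext h) hjk
      · exact (key k j h).symm
    · -- cover
      intro i
      have hmem : i ∈ S (m-1+1) := by
        rw [show m-1+1 = m by omega, hSm]
        exact Finset.mem_univ i
      have hex : ∃ k, i ∈ S (k+1) := ⟨m-1, hmem⟩
      set j0 := Nat.find hex with hj0def
      have hj0 : j0 ≤ m - 1 := Nat.find_le hmem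
      have hspec : i ∈ S (j0 + 1) := Nat.find_spec hex
      have hnot : i ∉ S j0 := by
        rcases Nat.eq_zero_or_pos j0 with h0 | hpos
        · rw [h0, hS0]
          exact Finset.notMem_empty i
        · intro hmem'
          apply Nat.find_min hex (show j0 - 1 < j0 by omega)
          have hadd : j0 - 1 + 1 = j0 := by omega
          rw [hadd]
          exact hmem'
      exact ⟨⟨j0, by omega⟩, Finset.mem_sdiff.2 ⟨hspec, hnot⟩⟩
  · -- partition exists → shuffle exists
    rintro ⟨part, hcard, hpsum, hdisj, hcover⟩
    choose g hg using hcover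
    set L : List (ℕ × ℕ) := List.ofFn (fun i => (e i, (g i : ℕ))) with hL
    have hW : W (List.replicate m B) ∈ Shuffles (L.map fun p => sab p.1) := by
      apply build
      · intro p hp
        rw [List.length_replicate]
        rw [hL, List.mem_ofFn] at hp
        obtain ⟨i, rfl⟩ := hp
        exact (g i).isLt
      · intro k
        have hbs : blockSum L k = ∑ i : Fin (3*m), if (g i : ℕ) = k then e i else 0 := by
          rw [hL, blockSum, List.map_ofFn, List.sum_ofFn]
          rfl
        by_cases hk : k < m
        · have hgd : (List.replicate m B).getD k 0 = B := by
            rw [List.getD_eq_getElem?_getD, List.getElem?_replicate, if_pos hk]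
            rfl
          have hiff : ∀ i : Fin (3*m), ((g i : ℕ) = k) ↔ i ∈ part ⟨k, hk⟩ := by
            intro i
            constructor
            · intro h
              have hgi : g i = ⟨k, hk⟩ := Fin.ext h
              exact hgi ▸ hg i
            · intro h
              by_contra hne
              have hne' : g i ≠ ⟨k, hk⟩ := fun hh => hne (by rw [hh])
              exact (Finset.disjoint_left.1 (hdisj _ _ hne') (hg i)) h
          rw [hbs, hgd]
          calc ∑ i : Fin (3*m), (if (g i:ℕ) = k then e i else 0)
              = ∑ i : Fin (3*m), (if i ∈ part ⟨k, hk⟩ then e i else 0) :=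
                Finset.sum_congr rfl fun i _ => if_congr (hiff i) rfl rfl
            _ = ∑ i ∈ Finset.univ ∩ part ⟨k,hk⟩, e i := Finset.sum_ite_mem _ _ _
            _ = ∑ i ∈ part ⟨k,hk⟩, e i := by rw [Finset.univ_inter]
            _ = B := hpsum _
        · have hgd : (List.replicate m B).getD k 0 = 0 := by
            rw [List.getD_eq_getElem?_getD, List.getElem?_replicate, if_neg hk]
            rfl
          rw [hbs, hgd, Finset.sum_eq_zero]
          intro i _
          rw [if_neg]
          exact fun h => hk (h ▸ (g i).isLt)
    have hmap : (L.map fun p => sab p.1) = List.ofFn (fun i => sab (e i)) := by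
      rw [hL, List.map_ofFn]
      rfl
    refine ⟨wpow (sab B) m, ?_, m, rfl⟩
    rw [← W_replicate, ← hmap]
    exact hW

end CTS
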